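/- For every nonnegative integer n, Q_0(n) = \sum_{k=0}^{\infty} pod((n - k(k+1)/2)/2), where pod(x) is understood to be 0 when x is not a nonnegative integer. -/

import Mathlib

/-- `Q0 n`: number of partitions of `n` into distinct parts none divisible by 4. -/
noncomputable def Q0 (n : ℕ) : ℕ :=
  Nat.card {p : n.Partition // p.parts.Nodup ∧ ∀ x ∈ p.parts, ¬ (4 ∣ x)}

/-- `pod n`: partitions of `n` into parts not congruent to 2 mod 4. -/
noncomputable def pod (n : ℕ) : ℕ :=
  Nat.card {p : n.Partition // ∀ x ∈ p.parts, x % 4 ≠ 2}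

open PowerSeries Finset
open scoped Classical

noncomputable section AuxAll

/-- allowed parts for distinct partitions avoiding multiples of 4 -/
def ps1 (n : ℕ) : Finset ℕ := (Finset.range (n+1)).filter fun i => ¬ (4 ∣ i) ∧ 0 < i

/-- allowed parts for pod partitions -/
def ps2 (n : ℕ) : Finset ℕ := (Finset.range (n+1)).filter fun i => i % 4 ≠ 2 ∧ 0 < i



/-- indicator power series of a set of naturals -/
noncomputable def indSeries (s : Set ℕ) : PowerSeries ℚ :=
  PowerSeries.mk fun n => if n ∈ s then 1 else 0

theorem coeff_indSeries (s : Set ℕ) (n : ℕ) :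
    PowerSeries.coeff n (indSeries s) = if n ∈ s then 1 else 0 :=
  PowerSeries.coeff_mk _ _

/-- the finsupp associated to a partition -/
noncomputable def partFn {n : ℕ} (p : n.Partition) : ℕ →₀ ℕ :=
  Finsupp.onFinset p.parts.toFinset (fun i => i * p.parts.count i) (by
    intro i hi
    have h2 : p.parts.count i ≠ 0 := fun h => hi (by rw [h, mul_zero])
    rw [Multiset.mem_toFinset, ← Multiset.count_pos]
    omega)

lemma partFn_apply {n : ℕ} (p : n.Partition) (i : ℕ) :
    partFn p i = i * p.parts.count i := rfl

theorem gf_prop (n : ℕ) (s : Finset ℕ) (hs : ∀ i ∈ s, 0 < i) (c : ℕ → Set ℕ)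
    (hc : ∀ i, i ∉ s → 0 ∈ c i) :
    ((Finset.univ.filter fun p : n.Partition =>
        (∀ j, p.parts.count j ∈ c j) ∧ ∀ j ∈ p.parts, j ∈ s).card : ℚ) =
      PowerSeries.coeff n (∏ i ∈ s, indSeries ((i * ·) '' c i)) := by
  rw [PowerSeries.coeff_prod]
  simp_rw [coeff_indSeries, Finset.prod_boole, Finset.sum_boole]
  congr 1
  refine Finset.card_bij (fun p _ => partFn p) ?_ ?_ ?_
  · -- membership
    rintro p hp
    simp only [Finset.mem_filter, Finset.mem_univ, true_and] at hp
    obtain ⟨hcount, hmem⟩ := hp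
    simp only [Finset.mem_filter, Finset.mem_finsuppAntidiag]
    refine ⟨⟨?_, ?_⟩, ?_⟩
    · -- sum over s of partFn = n
      have hsub : p.parts.toFinset ⊆ s := fun i hi =>
        hmem i (Multiset.mem_toFinset.mp hi)
      rw [← Finset.sum_subset hsub]
      · have h1 := congrArg Multiset.sum (Multiset.toFinset_sum_count_nsmul_eq p.parts)
        rw [Multiset.sum_sum] at h1
        calc ∑ i ∈ p.parts.toFinset, partFn p i
            = ∑ i ∈ p.parts.toFinset, (p.parts.count i • ({i} : Multiset ℕ)).sum := by
              refine Finset.sum_congr rfl fun i _ => ?_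
              rw [partFn_apply, Multiset.nsmul_singleton, Multiset.sum_replicate,
                smul_eq_mul, mul_comm]
        _ = p.parts.sum := h1
        _ = n := p.parts_sum
      · intro i _ hi
        rw [partFn_apply,
          Multiset.count_eq_zero_of_notMem (by simpa using hi), mul_zero]
    · -- support ⊆ s
      refine (Finsupp.support_onFinset_subset).trans ?_
      intro i hi
      exact hmem i (Multiset.mem_toFinset.mp hi)
    · -- values in image
      intro i hi
      exact ⟨p.parts.count i, hcount i, (partFn_apply p i).symm⟩
  · -- injective
    intro p hp q hq h
    simp only [Finset.mem_filter, Finset.mem_univ, true_and] at hp hq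
    ext1
    ext i
    by_cases his : 0 < i
    · have := congrArg (fun f : ℕ →₀ ℕ => f i) h
      simp only [partFn_apply] at this
      exact Nat.eq_of_mul_eq_mul_left his this
    · have : i = 0 := by omega
      subst this
      rw [Multiset.count_eq_zero_of_notMem, Multiset.count_eq_zero_of_notMem]
      · intro hmem; exact absurd (q.parts_pos hmem) (lt_irrefl 0)
      · intro hmem; exact absurd (p.parts_pos hmem) (lt_irrefl 0)
  · -- surjective
    intro l hl
    simp only [Finset.mem_filter, Finset.mem_finsuppAntidiag] at hl
    obtain ⟨⟨hsum, hsupp⟩, himg⟩ := hl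
    have hdvd : ∀ i ∈ s, i ∣ l i := by
      intro i hi
      obtain ⟨m, _, hm⟩ := himg i hi
      exact ⟨m, hm.symm⟩
    refine ⟨⟨∑ i ∈ s, Multiset.replicate (l i / i) i, ?_, ?_⟩, ?_, ?_⟩
    · -- positivity
      intro i hi
      rw [Multiset.mem_sum] at hi
      obtain ⟨j, hj, hij⟩ := hi
      rw [Multiset.eq_of_mem_replicate hij]
      exact hs j hj
    · -- sum
      rw [Multiset.sum_sum]
      rw [← hsum]
      refine Finset.sum_congr rfl fun i hi => ?_
      rw [Multiset.sum_replicate, smul_eq_mul]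
      exact Nat.div_mul_cancel (hdvd i hi)
    · -- in the filter set
      simp only [Finset.mem_filter, Finset.mem_univ, true_and]
      have hcount : ∀ j, Multiset.count j (∑ i ∈ s, Multiset.replicate (l i / i) i) =
          if j ∈ s then l j / j else 0 := by
        intro j
        rw [Multiset.count_sum']
        simp_rw [Multiset.count_replicate]
        rw [Finset.sum_ite_eq' s j (fun i => l i / i)]
      constructor
      · intro j
        show Multiset.count j _ ∈ c j
        rw [hcount j]
        split_ifs with hj
        · obtain ⟨m, hmc, hm⟩ := himg j hj
          rw [← hm, Nat.mul_div_cancel_left m (hs j hj)]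
          exact hmc
        · exact hc j hj
      · intro j hj
        rw [Multiset.mem_sum] at hj
        obtain ⟨i, hi, hji⟩ := hj
        rw [Multiset.eq_of_mem_replicate hji]
        exact hi
    · -- maps to l
      ext i
      rw [partFn_apply]
      show i * Multiset.count i _ = l i
      rw [Multiset.count_sum']
      simp_rw [Multiset.count_replicate]
      rw [Finset.sum_ite_eq' s i (fun j => l j / j)]
      split_ifs with hi
      · exact Nat.mul_div_cancel' (hdvd i hi)
      · rw [mul_zero]
        by_contra h
        exact hi (hsupp (Finsupp.mem_support_iff.mpr fun hh => h hh.symm))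


lemma image_le_one (i : ℕ) (hi : 0 < i) : ((i * ·) '' {m : ℕ | m ≤ 1}) = {0, i} := by
  ext x
  simp only [Set.mem_image, Set.mem_setOf_eq, Set.mem_insert_iff, Set.mem_singleton_iff]
  constructor
  · rintro ⟨m, hm, rfl⟩
    interval_cases m
    · left; omega
    · right; omega
  · rintro (rfl | rfl)
    · exact ⟨0, by omega, by omega⟩
    · exact ⟨1, by omega, by omega⟩

lemma image_univ_mul (j : ℕ) : ((j * ·) '' Set.univ) = {k : ℕ | j ∣ k} := by
  ext x
  simp only [Set.image_univ, Set.mem_range, Set.mem_setOf_eq]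
  exact ⟨fun ⟨m, hm⟩ => ⟨m, hm.symm⟩, fun ⟨m, hm⟩ => ⟨m, hm.symm⟩⟩

lemma indSeries_pair (i : ℕ) (hi : 0 < i) :
    indSeries {0, i} = 1 + (PowerSeries.X : PowerSeries ℚ) ^ i := by
  ext n
  rw [coeff_indSeries]
  rw [map_add, PowerSeries.coeff_one, PowerSeries.coeff_X_pow]
  simp only [Set.mem_insert_iff, Set.mem_singleton_iff]
  split_ifs with h1 h2 h3 h4 h5 <;> try omega
  all_goals norm_num
  all_goals omega

lemma indSeries_dvd_mul (d : ℕ) (hd : 0 < d) :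
    ((1 : PowerSeries ℚ) - PowerSeries.X ^ d) * indSeries {k : ℕ | d ∣ k} = 1 := by
  ext n
  rw [sub_mul, one_mul, map_sub, PowerSeries.coeff_X_pow_mul', coeff_indSeries,
    PowerSeries.coeff_one]
  simp only [Set.mem_setOf_eq]
  by_cases h0 : n = 0
  · subst h0
    rw [if_pos (dvd_zero d), if_neg (by omega), if_pos rfl, sub_zero]
  · rw [if_neg h0]
    by_cases hdn : d ≤ n
    · rw [if_pos hdn, coeff_indSeries]
      simp only [Set.mem_setOf_eq]
      have hiff : d ∣ n ↔ d ∣ n - d := by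
        constructor
        · intro h; exact Nat.dvd_sub h dvd_rfl
        · intro h
          have : n = (n - d) + d := by omega
          rw [this]; exact Nat.dvd_add h dvd_rfl
      split_ifs with ha hb hb
      · norm_num
      · exact absurd (hiff.mp ha) hb
      · exact absurd (hiff.mpr hb) ha
      · norm_num
    · rw [if_neg hdn, sub_zero, if_neg]
      intro hdvd
      exact hdn (Nat.le_of_dvd (by omega) hdvd)


lemma part_le_of_mem {n : ℕ} (p : n.Partition) {j : ℕ} (hj : j ∈ p.parts) : j ≤ n := by
  have := Multiset.single_le_sum (fun x _ => Nat.zero_le x) j hj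
  rwa [p.parts_sum] at this

lemma natCard_eq_filter {n : ℕ} (P : n.Partition → Prop) :
    Nat.card {p : n.Partition // P p} = (Finset.univ.filter P).card := by
  rw [Nat.card_eq_fintype_card, Fintype.card_subtype]

lemma Q0_eq_card (n : ℕ) :
    Q0 n = (Finset.univ.filter fun p : n.Partition =>
        (∀ j, p.parts.count j ∈ {m : ℕ | m ≤ 1}) ∧ ∀ j ∈ p.parts, j ∈ ps1 n).card := by
  rw [Q0, natCard_eq_filter]
  congr 1
  ext p
  simp only [Multiset.nodup_iff_count_le_one, Set.mem_setOf_eq, ps1, Finset.mem_filter,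
    Finset.mem_range, Finset.mem_univ, true_and]
  constructor
  · rintro ⟨h1, h2⟩
    exact ⟨h1, fun j hj => ⟨Nat.lt_succ_of_le (part_le_of_mem p hj), h2 j hj, p.parts_pos hj⟩⟩
  · rintro ⟨h1, h2⟩
    exact ⟨h1, fun j hj => (h2 j hj).2.1⟩

lemma pod_eq_card (m B : ℕ) (hB : m ≤ B) :
    pod m = (Finset.univ.filter fun p : m.Partition =>
        (∀ j, p.parts.count j ∈ (Set.univ : Set ℕ)) ∧ ∀ j ∈ p.parts, j ∈ ps2 B).card := by
  rw [pod, natCard_eq_filter]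
  congr 1
  ext p
  simp only [Set.mem_univ, forall_const, true_and, ps2, Finset.mem_filter, Finset.mem_range,
    Finset.mem_univ]
  constructor
  · intro h
    exact fun j hj => ⟨by have := part_le_of_mem p hj; omega, h j hj, p.parts_pos hj⟩
  · intro h j hj
    exact (h j hj).2.1

/-- doubling a partition -/
lemma card_double (m B : ℕ) :
    ((Finset.univ.filter fun p : (2*m).Partition =>
        (∀ j, p.parts.count j ∈ (Set.univ : Set ℕ)) ∧
          ∀ j ∈ p.parts, j ∈ (ps2 B).image (2 * ·)).card)
    = (Finset.univ.filter fun p : m.Partition =>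
        (∀ j, p.parts.count j ∈ (Set.univ : Set ℕ)) ∧ ∀ j ∈ p.parts, j ∈ ps2 B).card := by
  refine (Finset.card_bij (fun q _ => ?_) ?_ ?_ ?_).symm
  -- map: double all parts
  · exact ⟨q.parts.map (2 * ·), by
      intro i hi
      obtain ⟨a, ha, rfl⟩ := Multiset.mem_map.mp hi
      have := q.parts_pos ha; omega, by
      rw [Multiset.sum_map_mul_left]
      simp [q.parts_sum, Multiset.map_id']⟩
  · intro q hq
    simp only [Finset.mem_filter, Finset.mem_univ, true_and, Set.mem_univ, forall_const,
      true_and] at hq ⊢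
    intro j hj
    obtain ⟨a, ha, rfl⟩ := Multiset.mem_map.mp hj
    exact Finset.mem_image.mpr ⟨a, hq a ha, rfl⟩
  · intro q1 h1 q2 h2 h
    have : q1.parts.map (2 * ·) = q2.parts.map (2 * ·) := congrArg Nat.Partition.parts h
    ext j
    have h2 : Function.Injective (2 * · : ℕ → ℕ) := fun a b hab => by
      simp only [] at hab; omega
    rw [Multiset.map_injective h2 this]
  · intro p hp
    simp only [Finset.mem_filter, Finset.mem_univ, true_and, Set.mem_univ, forall_const,
      true_and] at hp
    have hev : ∀ j ∈ p.parts, ∃ a ∈ ps2 B, 2 * a = j := by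
      intro j hj
      obtain ⟨a, ha, haj⟩ := Finset.mem_image.mp (hp j hj)
      exact ⟨a, ha, haj⟩
    -- q.parts = p.parts.map (·/2)
    refine ⟨⟨p.parts.map (fun x => x / 2), ?_, ?_⟩, ?_, ?_⟩
    · intro i hi
      obtain ⟨a, ha, rfl⟩ := Multiset.mem_map.mp hi
      obtain ⟨b, hb, hba⟩ := hev a ha
      have : (0:ℕ) < b := by
        simp only [ps2, Finset.mem_filter] at hb; exact hb.2.2
      omega
    · -- sum of halves
      have : (p.parts.map (fun x => x / 2)).map (2 * ·) = p.parts := by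
        rw [Multiset.map_map]
        refine Multiset.map_congr rfl ?_ |>.trans (Multiset.map_id _)
        intro x hx
        obtain ⟨b, _, hb⟩ := hev x hx
        simp only [Function.comp_apply, id_eq]
        omega
      have h2 := congrArg Multiset.sum this
      rw [Multiset.sum_map_mul_left, Multiset.map_id'] at h2
      rw [p.parts_sum] at h2
      omega
    · simp only [Finset.mem_filter, Finset.mem_univ, true_and, Set.mem_univ, forall_const,
        true_and]
      intro j hj
      obtain ⟨a, ha, rfl⟩ := Multiset.mem_map.mp hj
      obtain ⟨b, hb, hba⟩ := hev a ha
      have : a / 2 = b := by omega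
      rwa [this]
    · ext1
      show (p.parts.map (fun x => x / 2)).map (2 * ·) = p.parts
      rw [Multiset.map_map]
      refine Multiset.map_congr rfl ?_ |>.trans (Multiset.map_id _)
      intro x hx
      obtain ⟨b, _, hb⟩ := hev x hx
      simp only [Function.comp_apply, id_eq]
      omega

lemma card_odd (M B : ℕ) (hM : M % 2 = 1) :
    ((Finset.univ.filter fun p : M.Partition =>
        (∀ j, p.parts.count j ∈ (Set.univ : Set ℕ)) ∧
          ∀ j ∈ p.parts, j ∈ (ps2 B).image (2 * ·)).card) = 0 := by
  rw [Finset.card_eq_zero, Finset.filter_eq_empty_iff]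
  rintro p - ⟨-, h⟩
  have key : ∀ s : Multiset ℕ, (∀ x ∈ s, Even x) → Even s.sum := by
    intro s
    induction s using Multiset.induction_on with
    | empty => simp
    | cons a t ih =>
      intro hyp
      simp only [Multiset.sum_cons]
      exact (hyp a (Multiset.mem_cons_self _ _)).add
        (ih fun x hx => hyp x (Multiset.mem_cons_of_mem hx))
  have : Even p.parts.sum := by
    refine key _ ?_
    intro j hj
    obtain ⟨a, _, rfl⟩ := Finset.mem_image.mp (h j hj)
    exact ⟨a, two_mul a⟩
  rw [p.parts_sum] at this
  rcases this with ⟨c, hc⟩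
  omega




/-- Gaussian binomial coefficients as polynomials over ℚ -/
noncomputable def qb : ℕ → ℕ → Polynomial ℚ
  | 0, 0 => 1
  | 0, _+1 => 0
  | _+1, 0 => 1
  | M+1, k+1 => qb M (k+1) * Polynomial.X ^ (k+1) + qb M k

lemma qb_succ_succ (M k : ℕ) :
    qb (M+1) (k+1) = qb M (k+1) * Polynomial.X ^ (k+1) + qb M k := rfl

lemma qb_zero_left (M : ℕ) : qb M 0 = 1 := by cases M <;> rfl

lemma qb_eq_zero : ∀ {M k : ℕ}, M < k → qb M k = 0 := by
  intro M
  induction M with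
  | zero => intro k hk; match k, hk with | k+1, _ => rfl
  | succ M ih =>
    intro k hk
    match k, hk with
    | k+1, hk =>
      rw [qb_succ_succ, ih (by omega), ih (by omega), zero_mul, zero_add]

lemma qb_self : ∀ M : ℕ, qb M M = 1 := by
  intro M
  induction M with
  | zero => rfl
  | succ M ih => rw [qb_succ_succ, qb_eq_zero (by omega), zero_mul, zero_add, ih]

lemma qb_one : ∀ M : ℕ, qb M 1 = ∑ i ∈ range M, Polynomial.X ^ i := by
  intro M
  induction M with
  | zero => simp [qb]
  | succ M ih =>
    rw [qb_succ_succ, ih, qb_zero_left, Finset.sum_range_succ']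
    rw [Finset.sum_mul]
    simp [pow_succ, pow_zero]

lemma qb_pascalDiff : ∀ (M k : ℕ),
    qb M (k+1) * (Polynomial.X ^ (k+1) - 1) = qb M k * (Polynomial.X ^ (M - k) - 1) := by
  intro M
  induction M with
  | zero =>
    intro k
    cases k with
    | zero => simp [qb]
    | succ k => simp [qb, qb_eq_zero (by omega : (0:ℕ) < k + 2), qb_eq_zero (by omega : (0:ℕ) < k + 1)]
  | succ M ih =>
    intro k
    cases k with
    | zero =>
      rw [qb_one, qb_zero_left, Nat.sub_zero, one_mul, pow_one, geom_sum_mul]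
    | succ k'' =>
      by_cases hk : k'' + 1 ≤ M
      · rw [qb_succ_succ M (k''+1), qb_succ_succ M k'']
        have i1 := ih (k''+1)
        have i2 := ih k''
        have he : M - k'' = M + 1 - (k''+1) := by omega
        rw [he] at i2
        have hx1 : (Polynomial.X : Polynomial ℚ) ^ (k''+2) * Polynomial.X ^ (M - (k''+1))
            = Polynomial.X ^ (M+1) := by
          rw [← pow_add]; congr 1; omega
        have hx2 : (Polynomial.X : Polynomial ℚ) ^ (k''+1) * Polynomial.X ^ (M + 1 - (k''+1))
            = Polynomial.X ^ (M+1) := by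
          rw [← pow_add]; congr 1; omega
        linear_combination (Polynomial.X ^ (k''+2)) * i1 + i2 + (qb M (k''+1)) * hx1
          - (qb M (k''+1)) * hx2
      · by_cases hk2 : k'' + 1 = M + 1
        · rw [qb_eq_zero (by omega : M + 1 < k'' + 2)]
          have : M + 1 - (k''+1) = 0 := by omega
          rw [this, pow_zero, sub_self, mul_zero, zero_mul]
        · rw [qb_eq_zero (by omega : M + 1 < k'' + 2), qb_eq_zero (by omega : M + 1 < k'' + 1)]
          simp

lemma qb_pascalB (M k : ℕ) :
    qb (M+1) (k+1) = qb M (k+1) + Polynomial.X ^ (M - k) * qb M k := by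
  rw [qb_succ_succ]
  linear_combination qb_pascalDiff M k

/-- `qfac m = ∏ (1 - X^(i+1))` -/
noncomputable def qfac (m : ℕ) : Polynomial ℚ :=
  ∏ i ∈ range m, (1 - Polynomial.X ^ (i+1))

lemma qfac_succ (m : ℕ) : qfac (m+1) = qfac m * (1 - Polynomial.X ^ (m+1)) :=
  Finset.prod_range_succ _ _

lemma qb_mul_qfac : ∀ (M k : ℕ), k ≤ M → qb M k * qfac k * qfac (M - k) = qfac M := by
  intro M
  induction M with
  | zero =>
    intro k hk
    interval_cases k
    simp [qb, qfac]
  | succ M ih =>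
    intro k hk
    cases k with
    | zero =>
      simp only [qb_zero_left, qfac, Finset.range_zero, Finset.prod_empty, one_mul,
        Nat.sub_zero]
    | succ k' =>
      by_cases hk' : k' + 1 ≤ M
      · have hsub0 : M + 1 - (k'+1) = M - k' := by omega
        have hsub2 : M - k' = (M - (k'+1)) + 1 := by omega
        have A := ih (k'+1) hk'
        have B := ih k' (by omega)
        have f2 : qfac (M - k') = qfac (M - (k'+1)) * (1 - Polynomial.X ^ (M - k')) := by
          rw [hsub2]
          rw [qfac_succ, ← hsub2]
        have hexp : (Polynomial.X : Polynomial ℚ) ^ (k'+1) * Polynomial.X ^ (M - k')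
            = Polynomial.X ^ (M+1) := by
          rw [← pow_add]; congr 1; omega
        rw [qb_succ_succ, hsub0, qfac_succ M, qfac_succ k', f2]
        rw [qfac_succ k'] at A
        rw [f2] at B
        linear_combination (Polynomial.X ^ (k'+1) * (1 - Polynomial.X ^ (M - k'))) * A
          + (1 - Polynomial.X ^ (k'+1)) * B - qfac M * hexp
      · have hM : k' = M := by omega
        rw [show k' = M from hM, qb_self]
        have h4 : M + 1 - (M + 1) = 0 := by omega
        rw [h4]
        simp [qfac]

/-- triangular numbers -/
def tri : ℕ → ℕ
  | 0 => 0
  | m+1 => tri m + m + 1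

lemma tri_zero : tri 0 = 0 := rfl

lemma tri_succ (m : ℕ) : tri (m+1) = tri m + m + 1 := rfl

lemma tri_eq (m : ℕ) : tri m = m * (m+1) / 2 := by
  induction m with
  | zero => rfl
  | succ m ih =>
    rw [tri_succ, ih]
    have : (m+1) * (m+1+1) = m * (m+1) + 2*(m+1) := by ring
    omega

lemma tri_ge (m : ℕ) : m ≤ tri m := by
  induction m with
  | zero => simp [tri]
  | succ m ih => rw [tri_succ]; omega

/-- centered exponent: `cexp N j = T_{j - N}` for `j ≥ N`, `T_{N-1-j}` for `j < N`. -/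
def cexp (N j : ℕ) : ℕ := tri (j - N) + tri (N - 1 - j)

lemma cexpE1 (N j : ℕ) : j + cexp (N+1) j = N + cexp N j := by
  unfold cexp
  rcases lt_trichotomy j N with h | h | h
  · obtain ⟨e, rfl⟩ : ∃ e, N = j + e + 1 := ⟨N - j - 1, by omega⟩
    have h1 : j - (j + e + 1 + 1) = 0 := by omega
    have h2 : j + e + 1 + 1 - 1 - j = e + 1 := by omega
    have h3 : j - (j + e + 1) = 0 := by omega
    have h4 : j + e + 1 - 1 - j = e := by omega
    rw [h1, h2, h3, h4, tri_succ, tri_zero]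
    omega
  · subst h
    have h1 : j - (j + 1) = 0 := by omega
    have h2 : j + 1 - 1 - j = 0 := by omega
    have h3 : j - j = 0 := by omega
    have h4 : j - 1 - j = 0 := by omega
    rw [h1, h2, h3, h4, tri_zero]
  · obtain ⟨d, rfl⟩ : ∃ d, j = N + 1 + d := ⟨j - N - 1, by omega⟩
    have h1 : N + 1 + d - (N + 1) = d := by omega
    have h2 : N + 1 - 1 - (N + 1 + d) = 0 := by omega
    have h3 : N + 1 + d - N = d + 1 := by omega
    have h4 : N - 1 - (N + 1 + d) = 0 := by omega
    rw [h1, h2, h3, h4, tri_succ, tri_zero]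
    omega

lemma cexpE2 (N j : ℕ) : cexp (N+1) (j+1) = cexp N j := by
  unfold cexp
  congr 1
  · congr 1; omega
  · congr 1; omega

lemma cexpE4 (N j : ℕ) (hj : j ≤ 2*N) :
    (2*N - j) + cexp N (j+1) = cexp N j + (N+1) := by
  unfold cexp
  rcases lt_trichotomy (j+1) N with h | h | h
  · obtain ⟨e, rfl⟩ : ∃ e, N = j + e + 2 := ⟨N - j - 2, by omega⟩
    have h1 : j + 1 - (j + e + 2) = 0 := by omega
    have h2 : j + e + 2 - 1 - (j + 1) = e := by omega
    have h3 : j - (j + e + 2) = 0 := by omega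
    have h4 : j + e + 2 - 1 - j = e + 1 := by omega
    rw [h1, h2, h3, h4, tri_succ, tri_zero]
    omega
  · obtain rfl : N = j + 1 := h.symm
    have h1 : j + 1 - (j + 1) = 0 := by omega
    have h2 : j + 1 - 1 - (j + 1) = 0 := by omega
    have h3 : j - (j + 1) = 0 := by omega
    have h4 : j + 1 - 1 - j = 0 := by omega
    rw [h1, h2, h3, h4, tri_zero]
    omega
  · obtain ⟨d, rfl⟩ : ∃ d, j = N + d := ⟨j - N, by omega⟩
    have h1 : N + d + 1 - N = d + 1 := by omega
    have h2 : N - 1 - (N + d + 1) = 0 := by omega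
    have h3 : N + d - N = d := by omega
    have h4 : N - 1 - (N + d) = 0 := by omega
    rw [h1, h2, h3, h4, tri_succ, tri_zero]
    omega

/-- Pascal-A expansion of a sum against an arbitrary function. -/
lemma sumLA (M : ℕ) (f : ℕ → Polynomial ℚ) :
    ∑ j ∈ Finset.range (M+2), qb (M+1) j * f j
      = ∑ j ∈ Finset.range (M+1), Polynomial.X ^ j * qb M j * f j
        + ∑ j ∈ Finset.range (M+1), qb M j * f (j+1) := by
  rw [Finset.sum_range_succ' (fun j => qb (M+1) j * f j) (M+1)]
  have h1 : ∀ j, qb (M+1) (j+1) * f (j+1)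
      = qb M (j+1) * Polynomial.X ^ (j+1) * f (j+1) + qb M j * f (j+1) := by
    intro j
    rw [qb_succ_succ]; ring
  rw [Finset.sum_congr rfl (fun j _ => h1 j), Finset.sum_add_distrib]
  have h2 : ∑ j ∈ Finset.range (M+1), qb M (j+1) * Polynomial.X ^ (j+1) * f (j+1)
      + qb (M+1) 0 * f 0
      = ∑ j ∈ Finset.range (M+1), Polynomial.X ^ j * qb M j * f j := by
    rw [qb_zero_left, one_mul]
    have h3 : ∑ j ∈ Finset.range (M+2), Polynomial.X ^ j * qb M j * f j
        = ∑ j ∈ Finset.range (M+1), Polynomial.X ^ (j+1) * qb M (j+1) * f (j+1) + f 0 := by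
      rw [Finset.sum_range_succ' (fun j => Polynomial.X ^ j * qb M j * f j) (M+1)]
      rw [pow_zero, one_mul, qb_zero_left, one_mul]
    have h4 : ∑ j ∈ Finset.range (M+2), Polynomial.X ^ j * qb M j * f j
        = ∑ j ∈ Finset.range (M+1), Polynomial.X ^ j * qb M j * f j := by
      rw [Finset.sum_range_succ, qb_eq_zero (by omega : M < M + 1)]
      ring
    rw [← h4, h3]
    congr 1
    refine Finset.sum_congr rfl fun j _ => by ring
  rw [← h2]
  ring

/-- Pascal-B expansion of a sum against an arbitrary function. -/
lemma sumLB (M : ℕ) (f : ℕ → Polynomial ℚ) :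
    ∑ j ∈ Finset.range (M+2), qb (M+1) j * f j
      = ∑ j ∈ Finset.range (M+1), qb M j * f j
        + ∑ j ∈ Finset.range (M+1), Polynomial.X ^ (M - j) * qb M j * f (j+1) := by
  rw [Finset.sum_range_succ' (fun j => qb (M+1) j * f j) (M+1)]
  have h1 : ∀ j, qb (M+1) (j+1) * f (j+1)
      = qb M (j+1) * f (j+1) + Polynomial.X ^ (M - j) * qb M j * f (j+1) := by
    intro j
    rw [qb_pascalB]; ring
  rw [Finset.sum_congr rfl (fun j _ => h1 j), Finset.sum_add_distrib]
  have h2 : ∑ j ∈ Finset.range (M+1), qb M (j+1) * f (j+1) + qb (M+1) 0 * f 0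
      = ∑ j ∈ Finset.range (M+1), qb M j * f j := by
    rw [qb_zero_left, one_mul]
    have h3 : ∑ j ∈ Finset.range (M+2), qb M j * f j
        = ∑ j ∈ Finset.range (M+1), qb M (j+1) * f (j+1) + f 0 := by
      rw [Finset.sum_range_succ' (fun j => qb M j * f j) (M+1), qb_zero_left, one_mul]
    have h4 : ∑ j ∈ Finset.range (M+2), qb M j * f j
        = ∑ j ∈ Finset.range (M+1), qb M j * f j := by
      rw [Finset.sum_range_succ, qb_eq_zero (by omega : M < M + 1)]
      ring
    rw [← h4, h3]
  rw [← h2]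
  ring

/-- The finite Jacobi-triple-product style identity (Gauss / Cauchy). -/
theorem jtp : ∀ N : ℕ,
    ∑ j ∈ Finset.range (2*N+1), qb (2*N) j * Polynomial.X ^ (cexp N j)
      = (∏ i ∈ Finset.range N, (1 + Polynomial.X ^ (i+1)))
        * ∏ i ∈ Finset.range N, (1 + Polynomial.X ^ i) := by
  intro N
  induction N with
  | zero => simp [qb, cexp, tri]
  | succ N ih =>
    have hstart : ∑ j ∈ Finset.range (2*(N+1)+1), qb (2*(N+1)) j
          * Polynomial.X ^ (cexp (N+1) j)
        = ∑ j ∈ Finset.range ((2*N+1)+2), qb ((2*N+1)+1) j * Polynomial.X ^ (cexp (N+1) j) := by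
      have hL : 2*(N+1) = (2*N+1) + 1 := by omega
      rw [hL]
    rw [hstart, sumLA]
    have hA : ∑ j ∈ Finset.range (2*N+2), Polynomial.X ^ j * qb (2*N+1) j
          * Polynomial.X ^ (cexp (N+1) j)
        = ∑ j ∈ Finset.range ((2*N)+2), qb ((2*N)+1) j
          * ((fun j => Polynomial.X ^ j * Polynomial.X ^ (cexp (N+1) j)) j) := by
      refine Finset.sum_congr rfl fun j _ => by ring
    have hB : ∑ j ∈ Finset.range (2*N+2), qb (2*N+1) j * Polynomial.X ^ (cexp (N+1) (j+1))
        = ∑ j ∈ Finset.range ((2*N)+2), qb ((2*N)+1) j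
          * ((fun j => Polynomial.X ^ (cexp (N+1) (j+1))) j) := rfl
    rw [hA, hB, sumLB (2*N) (fun j => Polynomial.X ^ j * Polynomial.X ^ (cexp (N+1) j)),
      sumLB (2*N) (fun j => Polynomial.X ^ (cexp (N+1) (j+1)))]
    have key : ∀ j ∈ Finset.range (2*N+1),
        qb (2*N) j * (Polynomial.X ^ j * Polynomial.X ^ (cexp (N+1) j))
        + Polynomial.X ^ (2*N - j) * qb (2*N) j
            * (Polynomial.X ^ (j+1) * Polynomial.X ^ (cexp (N+1) (j+1)))
        + (qb (2*N) j * Polynomial.X ^ (cexp (N+1) (j+1))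
        + Polynomial.X ^ (2*N - j) * qb (2*N) j * Polynomial.X ^ (cexp (N+1) (j+1+1)))
        = qb (2*N) j * Polynomial.X ^ (cexp N j)
            * ((1 + Polynomial.X ^ (N+1)) * (1 + Polynomial.X ^ N)) := by
      intro j hj
      rw [Finset.mem_range] at hj
      have e1 : (Polynomial.X : Polynomial ℚ) ^ j * Polynomial.X ^ (cexp (N+1) j)
          = Polynomial.X ^ (cexp N j) * Polynomial.X ^ N := by
        rw [← pow_add, ← pow_add]
        congr 1
        have := cexpE1 N j
        omega
      have e2 : (Polynomial.X : Polynomial ℚ) ^ (2*N - j)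
            * (Polynomial.X ^ (j+1) * Polynomial.X ^ (cexp (N+1) (j+1)))
          = Polynomial.X ^ (cexp N j) * Polynomial.X ^ (2*N+1) := by
        rw [← pow_add, ← pow_add, ← pow_add]
        congr 1
        rw [cexpE2]
        omega
      have e3 : cexp (N+1) (j+1) = cexp N j := cexpE2 N j
      have e4 : (Polynomial.X : Polynomial ℚ) ^ (2*N - j)
            * Polynomial.X ^ (cexp (N+1) (j+1+1))
          = Polynomial.X ^ (cexp N j) * Polynomial.X ^ (N+1) := by
        rw [← pow_add]
        rw [cexpE2 N (j+1)]
        rw [← pow_add]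
        congr 1
        have := cexpE4 N j (by omega)
        omega
      have e3p : (Polynomial.X : Polynomial ℚ) ^ (cexp (N+1) (j+1))
          = Polynomial.X ^ (cexp N j) := by rw [e3]
      linear_combination qb (2*N) j * e1 + qb (2*N) j * e2 + qb (2*N) j * e3p
        + qb (2*N) j * e4
    rw [← Finset.sum_add_distrib, ← Finset.sum_add_distrib, ← Finset.sum_add_distrib,
      Finset.sum_congr rfl key, ← Finset.sum_mul, ih, Finset.prod_range_succ,
      Finset.prod_range_succ]
    ring




open PowerSeries

/-- quotient ring mod X^(n+1) -/
abbrev Rq (n : ℕ) := PowerSeries ℚ ⧸ Ideal.span {(PowerSeries.X : PowerSeries ℚ)^(n+1)}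

/-- quotient map -/
noncomputable def Phi (n : ℕ) : PowerSeries ℚ →+* Rq n :=
  Ideal.Quotient.mk _

/-- composite map from polynomials -/
noncomputable def Psi (n : ℕ) : Polynomial ℚ →+* Rq n :=
  (Phi n).comp Polynomial.coeToPowerSeries.ringHom

lemma Phi_X_pow (n e : ℕ) (he : n + 1 ≤ e) : Phi n ((PowerSeries.X : PowerSeries ℚ)^e) = 0 := by
  rw [Phi, Ideal.Quotient.eq_zero_iff_mem, Ideal.mem_span_singleton]
  exact pow_dvd_pow _ he

lemma Psi_X_pow (n e : ℕ) : Psi n (Polynomial.X ^ e) = Phi n (PowerSeries.X ^ e) := by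
  rw [Psi, RingHom.comp_apply, map_pow]
  congr 1
  rw [Polynomial.coeToPowerSeries.ringHom_apply, Polynomial.coe_X]

lemma coeff_eq_of_Phi_eq {n : ℕ} {a b : PowerSeries ℚ} (h : Phi n a = Phi n b)
    (m : ℕ) (hm : m ≤ n) :
    PowerSeries.coeff m a = PowerSeries.coeff m b := by
  rw [Phi, Ideal.Quotient.eq, Ideal.mem_span_singleton] at h
  obtain ⟨c, hc⟩ := h
  have := congrArg (PowerSeries.coeff m) hc
  rw [map_sub, PowerSeries.coeff_X_pow_mul'] at this
  rw [if_neg (by omega)] at this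
  have h2 : PowerSeries.coeff m a - PowerSeries.coeff m b = 0 := this
  linarith

lemma Phi_one_sub (n e : ℕ) (he : n + 1 ≤ e) :
    Phi n (1 - (PowerSeries.X : PowerSeries ℚ)^e) = 1 := by
  rw [map_sub, map_one, Phi_X_pow n e he, sub_zero]

lemma Phi_one_add (n e : ℕ) (he : n + 1 ≤ e) :
    Phi n (1 + (PowerSeries.X : PowerSeries ℚ)^e) = 1 := by
  rw [map_add, map_one, Phi_X_pow n e he, add_zero]

lemma Psi_qfac_stable (n : ℕ) : ∀ m, n + 1 ≤ m → Psi n (qfac m) = Psi n (qfac (n+1)) := by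
  intro m hm
  induction m, hm using Nat.le_induction with
  | base => rfl
  | succ m hm ih =>
    rw [qfac_succ, map_mul, ih]
    have : Psi n (1 - Polynomial.X ^ (m+1)) = 1 := by
      rw [map_sub, map_one, Psi_X_pow, Phi_X_pow n (m+1) (by omega), sub_zero]
    rw [this, mul_one]

lemma Psi_qfac_unit (n : ℕ) : IsUnit (Psi n (qfac (n+1))) := by
  refine IsUnit.map (Phi n) ?_
  rw [PowerSeries.isUnit_iff_constantCoeff]
  have : PowerSeries.constantCoeff (Polynomial.coeToPowerSeries.ringHom (qfac (n+1)))
      = Polynomial.eval 0 (qfac (n+1)) := by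
    rw [← PowerSeries.coeff_zero_eq_constantCoeff_apply,
      Polynomial.coeToPowerSeries.ringHom_apply, Polynomial.coeff_coe,
      Polynomial.coeff_zero_eq_eval_zero]
  rw [this]
  have : Polynomial.eval 0 (qfac (n+1)) = 1 := by
    rw [qfac]
    rw [Polynomial.eval_prod]
    refine Finset.prod_eq_one fun i _ => ?_
    simp
  rw [this]
  exact isUnit_one

/-- the truncated Gauss identity -/
theorem gauss_trunc (n : ℕ) :
    Phi n (∑ k ∈ Finset.range (n+1), (PowerSeries.X : PowerSeries ℚ)^(tri k))
      = Phi n ((∏ i ∈ Finset.range (n+1), (1 - (PowerSeries.X : PowerSeries ℚ)^(i+1)))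
          * (∏ i ∈ Finset.range (n+1), (1 + (PowerSeries.X : PowerSeries ℚ)^(i+1)))
          * (∏ i ∈ Finset.range (n+1), (1 + (PowerSeries.X : PowerSeries ℚ)^(i+1)))) := by
  set N := 2*n+2 with hN
  have h0 := congrArg (Psi n) (jtp N)
  rw [map_sum, map_mul, map_prod, map_prod] at h0
  -- analyze LHS terms
  obtain ⟨u, hu⟩ := Psi_qfac_unit n
  have hqb : ∀ j, j ≤ 2*N → n + 1 ≤ j → n + 1 ≤ 2*N - j →
      Psi n (qb (2*N) j) * u * u = u := by
    intro j hj h1 h2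
    have := congrArg (Psi n) (qb_mul_qfac (2*N) j hj)
    rw [map_mul, map_mul] at this
    rw [Psi_qfac_stable n j h1, Psi_qfac_stable n (2*N - j) h2,
      Psi_qfac_stable n (2*N) (by omega), ← hu] at this
    exact this
  have hcancel : ∀ x y : Rq n, x * u * u = y * u * u → x = y := by
    intro x y h
    have := congrArg (fun z => z * (↑u⁻¹ : Rq n) * (↑u⁻¹ : Rq n)) h
    simpa [mul_assoc, Units.mul_inv, Units.inv_mul] using this
  have hqbc : ∀ j, cexp N j ≤ n → Psi n (qb (2*N) j) = Psi n (qb (2*N) N) := by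
    intro j hc
    have ht1 : j - N ≤ n := le_trans (le_trans (tri_ge _) (Nat.le_add_right _ _)) hc
    have ht2 : N - 1 - j ≤ n := le_trans (le_trans (tri_ge _) (Nat.le_add_left _ _)) hc
    refine hcancel _ _ ?_
    rw [hqb j (by omega) (by omega) (by omega), hqb N (by omega) (by omega) (by omega)]
  -- rewrite each term
  have hterm : ∀ j ∈ Finset.range (2*N+1),
      Psi n (qb (2*N) j * Polynomial.X ^ (cexp N j))
        = Psi n (qb (2*N) N) * Phi n (PowerSeries.X ^ (cexp N j)) := by
    intro j _
    rw [map_mul, Psi_X_pow]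
    by_cases hc : cexp N j ≤ n
    · rw [hqbc j hc]
    · rw [Phi_X_pow n _ (by omega), mul_zero, mul_zero]
  rw [Finset.sum_congr rfl hterm, ← Finset.mul_sum] at h0
  -- split the X-power sum
  have hsplit : ∑ j ∈ Finset.range (2*N+1), Phi n ((PowerSeries.X : PowerSeries ℚ) ^ (cexp N j))
      = Phi n (∑ k ∈ Finset.range (n+1), (PowerSeries.X : PowerSeries ℚ)^(tri k))
        + Phi n (∑ k ∈ Finset.range (n+1), (PowerSeries.X : PowerSeries ℚ)^(tri k)) := by
    have hNN : 2*N+1 = N + (N+1) := by omega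
    rw [hNN, Finset.sum_range_add]
    have hfirst : ∑ j ∈ Finset.range N, Phi n ((PowerSeries.X : PowerSeries ℚ) ^ (cexp N j))
        = ∑ j ∈ Finset.range N, Phi n ((PowerSeries.X : PowerSeries ℚ) ^ (tri j)) := by
      rw [← Finset.sum_range_reflect (fun j => Phi n ((PowerSeries.X : PowerSeries ℚ) ^ (tri j))) N]
      refine Finset.sum_congr rfl fun j hj => ?_
      rw [Finset.mem_range] at hj
      congr 2
      unfold cexp
      rw [show j - N = 0 by omega, tri_zero, zero_add]
    have hsecond : ∑ j ∈ Finset.range (N+1),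
          Phi n ((PowerSeries.X : PowerSeries ℚ) ^ (cexp N (N + j)))
        = ∑ j ∈ Finset.range (N+1), Phi n ((PowerSeries.X : PowerSeries ℚ) ^ (tri j)) := by
      refine Finset.sum_congr rfl fun j hj => ?_
      congr 2
      unfold cexp
      rw [show N + j - N = j by omega, show N - 1 - (N + j) = 0 by omega, tri_zero, add_zero]
    have hdrop : ∀ m, n + 1 ≤ m →
        ∑ j ∈ Finset.range m, Phi n ((PowerSeries.X : PowerSeries ℚ) ^ (tri j))
          = Phi n (∑ k ∈ Finset.range (n+1), (PowerSeries.X : PowerSeries ℚ)^(tri k)) := by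
      intro m hm
      rw [map_sum]
      refine (Finset.sum_subset (Finset.range_subset_range.mpr hm) fun i _ hni => ?_).symm
      rw [Finset.mem_range, not_lt] at hni
      exact Phi_X_pow n _ (by have := tri_ge i; omega)
    rw [hfirst, hsecond, hdrop N (by omega), hdrop (N+1) (by omega)]
  rw [hsplit] at h0
  -- RHS products
  have hprod1 : ∏ i ∈ Finset.range N, Psi n (1 + Polynomial.X ^ (i+1))
      = Phi n (∏ i ∈ Finset.range (n+1), (1 + (PowerSeries.X : PowerSeries ℚ)^(i+1))) := by
    rw [map_prod]
    have heq : ∀ i, Psi n (1 + Polynomial.X ^ (i+1)) = Phi n (1 + PowerSeries.X ^ (i+1)) := by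
      intro i
      rw [map_add, map_one, Psi_X_pow, map_add, map_one]
    rw [Finset.prod_congr rfl (fun i _ => heq i)]
    refine (Finset.prod_subset (Finset.range_subset_range.mpr (by omega : n + 1 ≤ N))
      fun i _ hni => ?_).symm
    rw [Finset.mem_range, not_lt] at hni
    exact Phi_one_add n _ (by omega)
  have hprod2 : ∏ i ∈ Finset.range N, Psi n (1 + Polynomial.X ^ i)
      = 2 * Phi n (∏ i ∈ Finset.range (n+1), (1 + (PowerSeries.X : PowerSeries ℚ)^(i+1))) := by
    have hN1 : N = (N - 1) + 1 := by omega
    rw [hN1, Finset.prod_range_succ' (fun i => Psi n (1 + Polynomial.X ^ i)) (N-1)]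
    have h00 : Psi n (1 + Polynomial.X ^ 0) = 2 := by
      rw [pow_zero, map_add, map_one]
      norm_num
    rw [h00, mul_comm]
    congr 1
    have heq : ∀ i, Psi n (1 + Polynomial.X ^ (i+1)) = Phi n (1 + PowerSeries.X ^ (i+1)) := by
      intro i
      rw [map_add, map_one, Psi_X_pow, map_add, map_one]
    rw [Finset.prod_congr rfl (fun i _ => heq i), map_prod]
    refine (Finset.prod_subset (Finset.range_subset_range.mpr (by omega : n + 1 ≤ N - 1))
      fun i _ hni => ?_).symm
    rw [Finset.mem_range, not_lt] at hni
    exact Phi_one_add n _ (by omega)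
  rw [hprod1, hprod2] at h0
  -- finish by units algebra
  have hA1 : Psi n (qfac (n+1))
      = Phi n (∏ i ∈ Finset.range (n+1), (1 - (PowerSeries.X : PowerSeries ℚ)^(i+1))) := by
    rw [qfac, map_prod, map_prod]
    refine Finset.prod_congr rfl fun i _ => ?_
    rw [map_sub, map_one, Psi_X_pow, map_sub, map_one]
  have hxu : Psi n (qb (2*N) N) * ↑u = 1 := by
    have h4 := hqb N (by omega) (by omega) (by omega)
    have h5 := congrArg (fun z => z * (↑u⁻¹ : Rq n)) h4
    simpa [mul_assoc] using h5
  have h6 : (Phi n (∑ k ∈ Finset.range (n+1), (PowerSeries.X : PowerSeries ℚ)^(tri k))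
        + Phi n (∑ k ∈ Finset.range (n+1), (PowerSeries.X : PowerSeries ℚ)^(tri k)))
      = ↑u * (Phi n (∏ i ∈ Finset.range (n+1), (1 + (PowerSeries.X : PowerSeries ℚ)^(i+1)))
          * (2 * Phi n (∏ i ∈ Finset.range (n+1),
              (1 + (PowerSeries.X : PowerSeries ℚ)^(i+1))))) := by
    have h7 := congrArg (fun z => (↑u : Rq n) * z) h0
    calc _ = ↑u * (Psi n (qb (2*N) N)
            * (Phi n (∑ k ∈ Finset.range (n+1), (PowerSeries.X : PowerSeries ℚ)^(tri k))
        + Phi n (∑ k ∈ Finset.range (n+1), (PowerSeries.X : PowerSeries ℚ)^(tri k)))) := by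
          rw [← mul_assoc]
          rw [mul_comm (↑u : Rq n) (Psi n (qb (2*N) N)), hxu, one_mul]
      _ = _ := by rw [h7]
  -- cancel the factor 2
  have htwo : IsUnit ((2 : ℚ⟦X⟧)) := by
    rw [PowerSeries.isUnit_iff_constantCoeff]
    have : PowerSeries.constantCoeff (R := ℚ) 2 = 2 := map_ofNat _ 2
    rw [this]
    exact isUnit_iff_ne_zero.mpr (by norm_num)
  have htwo' : IsUnit ((2 : Rq n)) := by
    have := IsUnit.map (Phi n) htwo
    rwa [map_ofNat] at this
  rw [map_mul, map_mul, ← hA1, ← hu]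
  refine htwo'.mul_left_cancel ?_
  calc (2 : Rq n) * Phi n (∑ k ∈ Finset.range (n+1), (PowerSeries.X : PowerSeries ℚ)^(tri k))
      = Phi n (∑ k ∈ Finset.range (n+1), (PowerSeries.X : PowerSeries ℚ)^(tri k))
        + Phi n (∑ k ∈ Finset.range (n+1), (PowerSeries.X : PowerSeries ℚ)^(tri k)) := by
        ring
    _ = ↑u * (Phi n (∏ i ∈ Finset.range (n+1), (1 + (PowerSeries.X : PowerSeries ℚ)^(i+1)))
          * (2 * Phi n (∏ i ∈ Finset.range (n+1),
              (1 + (PowerSeries.X : PowerSeries ℚ)^(i+1))))) := h6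
    _ = 2 * (↑u * Phi n (∏ i ∈ Finset.range (n+1),
            (1 + (PowerSeries.X : PowerSeries ℚ)^(i+1)))
          * Phi n (∏ i ∈ Finset.range (n+1),
            (1 + (PowerSeries.X : PowerSeries ℚ)^(i+1)))) := by
        ring





open PowerSeries

variable (n : ℕ)

noncomputable def Ae (n e : ℕ) : Rq n := Phi n (1 + (PowerSeries.X : PowerSeries ℚ)^e)
noncomputable def Be (n e : ℕ) : Rq n := Phi n (1 - (PowerSeries.X : PowerSeries ℚ)^e)

lemma Ae_one (e : ℕ) (he : n < e) : Ae n e = 1 := Phi_one_add n e (by omega)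
lemma Be_one (e : ℕ) (he : n < e) : Be n e = 1 := Phi_one_sub n e (by omega)

lemma AB_pair (e : ℕ) : Ae n e * Be n e = Be n (2*e) := by
  rw [Ae, Be, Be, ← map_mul]
  congr 1
  have h : (PowerSeries.X : PowerSeries ℚ)^e * PowerSeries.X^e = PowerSeries.X^(2*e) := by
    rw [← pow_add]; congr 1; omega
  linear_combination -h

/-- index sets for the common normal form -/
def OddS (n : ℕ) : Finset ℕ := (Finset.range (n+1)).filter fun i => i % 2 = 1
def OddH (n : ℕ) : Finset ℕ := (Finset.range (n+1)).filter fun m => m % 2 = 1 ∧ 2*m ≤ n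
def RR4 (n : ℕ) : Finset ℕ := (Finset.range (n+1)).filter fun r => 0 < r ∧ 4*r ≤ n

lemma prod_drop {S S' : Finset ℕ} {f : ℕ → Rq n} (hsub : S' ⊆ S)
    (h1 : ∀ i ∈ S, i ∉ S' → f i = 1) : ∏ i ∈ S, f i = ∏ i ∈ S', f i :=
  (Finset.prod_subset hsub h1).symm

lemma lhs_red :
    Phi n ((∏ i ∈ ps1 n, (1 + (PowerSeries.X : PowerSeries ℚ)^i))
        * ∏ i ∈ ps2 n, (1 - (PowerSeries.X : PowerSeries ℚ)^(2*i)))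
      = (∏ i ∈ OddS n, Ae n i) * (∏ m ∈ OddH n, Be n (4*m)) * (∏ r ∈ RR4 n, Be n (8*r)) := by
  rw [map_mul, map_prod, map_prod]
  -- split ps1
  rw [← Finset.prod_filter_mul_prod_filter_not (ps1 n) (fun i => i % 2 = 1)
    (fun i => Phi n (1 + (PowerSeries.X : PowerSeries ℚ)^i))]
  have hf1 : (ps1 n).filter (fun i => i % 2 = 1) = OddS n := by
    ext a
    simp only [ps1, OddS, Finset.mem_filter, Finset.mem_range]
    constructor
    · rintro ⟨⟨h1, h2, h3⟩, h4⟩; exact ⟨h1, h4⟩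
    · rintro ⟨h1, h2⟩
      refine ⟨⟨h1, ?_, by omega⟩, h2⟩
      omega
  have hf2 : (ps1 n).filter (fun i => ¬ i % 2 = 1) = (OddH n).image (2 * ·) := by
    ext a
    simp only [ps1, OddH, Finset.mem_filter, Finset.mem_range, Finset.mem_image]
    constructor
    · rintro ⟨⟨h1, h2, h3⟩, h4⟩
      refine ⟨a / 2, ⟨by omega, by omega, by omega⟩, by omega⟩
    · rintro ⟨m, ⟨h1, h2, h3⟩, rfl⟩
      refine ⟨⟨by omega, by omega, by omega⟩, by omega⟩
  rw [hf1, hf2, Finset.prod_image (fun x _ y _ h => Nat.eq_of_mul_eq_mul_left (by norm_num) h)]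
  -- split ps2
  rw [← Finset.prod_filter_mul_prod_filter_not (ps2 n) (fun i => i % 2 = 1)
    (fun i => Phi n (1 - (PowerSeries.X : PowerSeries ℚ)^(2*i)))]
  have hg1 : (ps2 n).filter (fun i => i % 2 = 1) = OddS n := by
    ext a
    simp only [ps2, OddS, Finset.mem_filter, Finset.mem_range]
    constructor
    · rintro ⟨⟨h1, h2, h3⟩, h4⟩; exact ⟨h1, h4⟩
    · rintro ⟨h1, h2⟩; exact ⟨⟨h1, by omega, by omega⟩, h2⟩
  have hg2 : (ps2 n).filter (fun i => ¬ i % 2 = 1) = (RR4 n).image (4 * ·) := by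
    ext a
    simp only [ps2, RR4, Finset.mem_filter, Finset.mem_range, Finset.mem_image]
    constructor
    · rintro ⟨⟨h1, h2, h3⟩, h4⟩
      exact ⟨a / 4, ⟨by omega, by omega, by omega⟩, by omega⟩
    · rintro ⟨r, ⟨h1, h2, h3⟩, rfl⟩
      refine ⟨⟨by omega, by omega, by omega⟩, by omega⟩
  rw [hg1, hg2, Finset.prod_image (fun x _ y _ h => Nat.eq_of_mul_eq_mul_left (by norm_num) h)]
  -- identify pieces : now goal in terms of Ae/Be
  have e1 : ∀ i ∈ OddS n, Phi n (1 + (PowerSeries.X : PowerSeries ℚ)^i) = Ae n i :=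
    fun i _ => rfl
  have e2 : ∀ m ∈ OddH n, Phi n (1 + (PowerSeries.X : PowerSeries ℚ)^(2*m)) = Ae n (2*m) :=
    fun m _ => rfl
  have e3 : ∀ i ∈ OddS n, Phi n (1 - (PowerSeries.X : PowerSeries ℚ)^(2*i)) = Be n (2*i) :=
    fun i _ => rfl
  have e4 : ∀ r ∈ RR4 n, Phi n (1 - (PowerSeries.X : PowerSeries ℚ)^(2*(4*r)))
      = Be n (8*r) := by
    intro r _
    rw [show 2*(4*r) = 8*r by ring]
    rfl
  rw [Finset.prod_congr rfl e1, Finset.prod_congr rfl e2, Finset.prod_congr rfl e3,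
    Finset.prod_congr rfl e4]
  -- drop OddS → OddH in the Be(2i) product
  have hsub : OddH n ⊆ OddS n := by
    intro a ha
    simp only [OddH, OddS, Finset.mem_filter, Finset.mem_range] at ha ⊢
    exact ⟨ha.1, ha.2.1⟩
  have hdrop : ∏ i ∈ OddS n, Be n (2*i) = ∏ i ∈ OddH n, Be n (2*i) := by
    refine prod_drop n hsub fun i hi hni => ?_
    simp only [OddH, OddS, Finset.mem_filter, Finset.mem_range] at hi hni
    refine Be_one n _ (by omega)
  rw [hdrop]
  -- pair over OddH
  have hpair : (∏ m ∈ OddH n, Ae n (2*m)) * (∏ i ∈ OddH n, Be n (2*i))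
      = ∏ m ∈ OddH n, Be n (4*m) := by
    rw [← Finset.prod_mul_distrib]
    refine Finset.prod_congr rfl fun m _ => ?_
    rw [AB_pair]
    congr 1
    omega
  calc (∏ i ∈ OddS n, Ae n i) * (∏ m ∈ OddH n, Ae n (2*m))
        * ((∏ i ∈ OddH n, Be n (2*i)) * (∏ r ∈ RR4 n, Be n (8*r)))
      = (∏ i ∈ OddS n, Ae n i)
        * ((∏ m ∈ OddH n, Ae n (2*m)) * (∏ i ∈ OddH n, Be n (2*i)))
        * (∏ r ∈ RR4 n, Be n (8*r)) := by ring
    _ = _ := by rw [hpair]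



lemma rhs_red :
    Phi n ((∏ i ∈ Finset.range (n+1), (1 - (PowerSeries.X : PowerSeries ℚ)^(i+1)))
          * (∏ i ∈ Finset.range (n+1), (1 + (PowerSeries.X : PowerSeries ℚ)^(i+1)))
          * (∏ i ∈ Finset.range (n+1), (1 + (PowerSeries.X : PowerSeries ℚ)^(i+1))))
      = (∏ i ∈ OddS n, Ae n i) * (∏ m ∈ OddH n, Be n (4*m)) * (∏ r ∈ RR4 n, Be n (8*r)) := by
  rw [map_mul, map_mul, map_prod, map_prod]
  -- combine pointwise
  rw [← Finset.prod_mul_distrib, ← Finset.prod_mul_distrib]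
  have hpt : ∀ i ∈ Finset.range (n+1),
      Phi n (1 - (PowerSeries.X : PowerSeries ℚ)^(i+1))
        * Phi n (1 + (PowerSeries.X : PowerSeries ℚ)^(i+1))
        * Phi n (1 + (PowerSeries.X : PowerSeries ℚ)^(i+1))
      = Ae n (i+1) * Be n (2*(i+1)) := by
    intro i _
    rw [← AB_pair]
    rw [Ae, Be]
    ring
  rw [Finset.prod_congr rfl hpt, Finset.prod_mul_distrib]
  -- move to the index set {1,...,n+1}
  set Efin : Finset ℕ := (Finset.range (n+2)).filter (fun e => 0 < e) with hE
  have himg : Efin = (Finset.range (n+1)).image (fun i => i + 1) := by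
    ext a
    simp only [hE, Finset.mem_filter, Finset.mem_range, Finset.mem_image]
    constructor
    · rintro ⟨h1, h2⟩; exact ⟨a - 1, by omega, by omega⟩
    · rintro ⟨i, h1, rfl⟩; exact ⟨by omega, by omega⟩
  have hinj1 : ∀ x ∈ Finset.range (n+1), ∀ y ∈ Finset.range (n+1),
      x + 1 = y + 1 → x = y := fun x _ y _ h => by omega
  have hPA : ∏ i ∈ Finset.range (n+1), Ae n (i+1) = ∏ e ∈ Efin, Ae n e := by
    rw [himg, Finset.prod_image hinj1]
  have hPB : ∏ i ∈ Finset.range (n+1), Be n (2*(i+1)) = ∏ e ∈ Efin, Be n (2*e) := by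
    rw [himg, Finset.prod_image hinj1]
  rw [hPA, hPB]
  -- parity splits of Efin
  set Hfin : Finset ℕ := (Finset.range (n+2)).filter (fun m => 0 < m ∧ 2*m ≤ n+1) with hH
  have hq3 : Efin.filter (fun e => ¬ e % 2 = 1) = Hfin.image (2 * ·) := by
    ext a
    simp only [hE, hH, Finset.mem_filter, Finset.mem_range, Finset.mem_image]
    constructor
    · rintro ⟨⟨h1, h2⟩, h3⟩; exact ⟨a/2, ⟨by omega, by omega, by omega⟩, by omega⟩
    · rintro ⟨m, ⟨h1, h2, h3⟩, rfl⟩; exact ⟨⟨by omega, by omega⟩, by omega⟩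
  have hinj2 : ∀ x ∈ Hfin, ∀ y ∈ Hfin, 2*x = 2*y → x = y :=
    fun x _ y _ h => by omega
  -- split the A-product
  rw [← Finset.prod_filter_mul_prod_filter_not Efin (fun e => e % 2 = 1) (fun e => Ae n e),
    ← Finset.prod_filter_mul_prod_filter_not Efin (fun e => e % 2 = 1) (fun e => Be n (2*e)),
    hq3, Finset.prod_image hinj2, Finset.prod_image hinj2]
  -- drop odd A-product to OddS n
  have hd1 : ∏ e ∈ Efin.filter (fun e => e % 2 = 1), Ae n e = ∏ i ∈ OddS n, Ae n i := by
    refine prod_drop n ?_ ?_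
    · intro a ha
      simp only [OddS, hE, Finset.mem_filter, Finset.mem_range] at ha ⊢
      exact ⟨⟨by omega, by omega⟩, ha.2⟩
    · intro i hi hni
      simp only [OddS, hE, Finset.mem_filter, Finset.mem_range] at hi hni
      exact Ae_one n _ (by omega)
  -- drop odd B-product to OddH n
  have hd2 : ∏ e ∈ Efin.filter (fun e => e % 2 = 1), Be n (2*e)
      = ∏ i ∈ OddH n, Be n (2*i) := by
    refine prod_drop n ?_ ?_
    · intro a ha
      simp only [OddH, hE, Finset.mem_filter, Finset.mem_range] at ha ⊢
      exact ⟨⟨by omega, by omega⟩, ha.2.1⟩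
    · intro i hi hni
      simp only [OddH, hE, Finset.mem_filter, Finset.mem_range] at hi hni
      exact Be_one n _ (by omega)
  -- split even A-product (over Hfin) by parity of m
  rw [← Finset.prod_filter_mul_prod_filter_not Hfin (fun m => m % 2 = 1)
    (fun m => Ae n (2*m))]
  -- odd part → OddH n
  have hd3 : ∏ m ∈ Hfin.filter (fun m => m % 2 = 1), Ae n (2*m)
      = ∏ m ∈ OddH n, Ae n (2*m) := by
    refine prod_drop n ?_ ?_
    · intro a ha
      simp only [OddH, hH, Finset.mem_filter, Finset.mem_range] at ha ⊢
      exact ⟨⟨by omega, by omega, by omega⟩, ha.2.1⟩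
    · intro i hi hni
      simp only [OddH, hH, Finset.mem_filter, Finset.mem_range] at hi hni
      exact Ae_one n _ (by omega)
  -- even part → RR4 n
  set H2fin : Finset ℕ := (Finset.range (n+2)).filter (fun r => 0 < r ∧ 4*r ≤ n+1) with hH2
  have hq5 : Hfin.filter (fun m => ¬ m % 2 = 1) = H2fin.image (2 * ·) := by
    ext a
    simp only [hH, hH2, Finset.mem_filter, Finset.mem_range, Finset.mem_image]
    constructor
    · rintro ⟨⟨h1, h2, h3⟩, h4⟩; exact ⟨a/2, ⟨by omega, by omega, by omega⟩, by omega⟩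
    · rintro ⟨r, ⟨h1, h2, h3⟩, rfl⟩; exact ⟨⟨by omega, by omega, by omega⟩, by omega⟩
  have hinj3 : ∀ x ∈ H2fin, ∀ y ∈ H2fin, 2*x = 2*y → x = y := fun x _ y _ h => by omega
  rw [hq5, Finset.prod_image hinj3]
  have hd4 : ∏ r ∈ H2fin, Ae n (2*(2*r)) = ∏ r ∈ RR4 n, Ae n (4*r) := by
    have : ∀ r ∈ H2fin, Ae n (2*(2*r)) = Ae n (4*r) := by
      intro r _
      rw [show 2*(2*r) = 4*r by ring]
    rw [Finset.prod_congr rfl this]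
    refine prod_drop n ?_ ?_
    · intro a ha
      simp only [RR4, hH2, Finset.mem_filter, Finset.mem_range] at ha ⊢
      exact ⟨by omega, by omega, by omega⟩
    · intro i hi hni
      simp only [RR4, hH2, Finset.mem_filter, Finset.mem_range] at hi hni
      exact Ae_one n _ (by omega)
  -- even part of B-product → RR4 n
  have hd5 : ∏ m ∈ Hfin, Be n (2*(2*m)) = ∏ m ∈ RR4 n, Be n (4*m) := by
    have : ∀ m ∈ Hfin, Be n (2*(2*m)) = Be n (4*m) := by
      intro m _
      rw [show 2*(2*m) = 4*m by ring]
    rw [Finset.prod_congr rfl this]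
    refine prod_drop n ?_ ?_
    · intro a ha
      simp only [RR4, hH, hH2, Finset.mem_filter, Finset.mem_range] at ha ⊢
      exact ⟨by omega, by omega, by omega⟩
    · intro i hi hni
      simp only [RR4, hH, hH2, Finset.mem_filter, Finset.mem_range] at hi hni
      exact Be_one n _ (by omega)
  rw [hd1, hd2, hd3, hd4, hd5]
  -- pairings
  have hp1 : (∏ m ∈ OddH n, Ae n (2*m)) * (∏ i ∈ OddH n, Be n (2*i))
      = ∏ m ∈ OddH n, Be n (4*m) := by
    rw [← Finset.prod_mul_distrib]
    refine Finset.prod_congr rfl fun m _ => ?_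
    rw [AB_pair]
    congr 1
    ring
  have hp2 : (∏ r ∈ RR4 n, Ae n (4*r)) * (∏ r ∈ RR4 n, Be n (4*r))
      = ∏ r ∈ RR4 n, Be n (8*r) := by
    rw [← Finset.prod_mul_distrib]
    refine Finset.prod_congr rfl fun r _ => ?_
    rw [AB_pair]
    congr 1
    ring
  calc (∏ i ∈ OddS n, Ae n i) * ((∏ m ∈ OddH n, Ae n (2*m)) * ∏ r ∈ RR4 n, Ae n (4*r))
        * ((∏ i ∈ OddH n, Be n (2*i)) * ∏ m ∈ RR4 n, Be n (4*m))
      = (∏ i ∈ OddS n, Ae n i)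
        * ((∏ m ∈ OddH n, Ae n (2*m)) * (∏ i ∈ OddH n, Be n (2*i)))
        * ((∏ r ∈ RR4 n, Ae n (4*r)) * (∏ r ∈ RR4 n, Be n (4*r))) := by ring
    _ = _ := by rw [hp1, hp2]




theorem main_cong (n : ℕ) :
    Phi n (∏ i ∈ ps1 n, (1 + (PowerSeries.X : PowerSeries ℚ)^i))
      = Phi n ((∑ k ∈ Finset.range (n+1), (PowerSeries.X : PowerSeries ℚ)^(tri k))
          * ∏ j ∈ (ps2 n).image (2 * ·), indSeries {k | j ∣ k}) := by
  have hpos : ∀ j ∈ (ps2 n).image (2 * ·), 0 < j := by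
    intro j hj
    obtain ⟨i, hi, rfl⟩ := Finset.mem_image.mp hj
    simp only [ps2, Finset.mem_filter] at hi
    omega
  have hVI : (∏ j ∈ (ps2 n).image (2 * ·), (1 - (PowerSeries.X : PowerSeries ℚ)^j))
      * (∏ j ∈ (ps2 n).image (2 * ·), indSeries {k | j ∣ k}) = 1 := by
    rw [← Finset.prod_mul_distrib]
    refine Finset.prod_eq_one fun j hj => indSeries_dvd_mul j (hpos j hj)
  have hunit : IsUnit (Phi n (∏ j ∈ (ps2 n).image (2 * ·),
      (1 - (PowerSeries.X : PowerSeries ℚ)^j))) :=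
    IsUnit.map (Phi n) (IsUnit.of_mul_eq_one _ hVI)
  refine hunit.mul_right_cancel ?_
  have hRHS : Phi n ((∑ k ∈ Finset.range (n+1), (PowerSeries.X : PowerSeries ℚ)^(tri k))
          * ∏ j ∈ (ps2 n).image (2 * ·), indSeries {k | j ∣ k})
        * Phi n (∏ j ∈ (ps2 n).image (2 * ·), (1 - (PowerSeries.X : PowerSeries ℚ)^j))
      = Phi n (∑ k ∈ Finset.range (n+1), (PowerSeries.X : PowerSeries ℚ)^(tri k)) := by
    rw [← map_mul]
    congr 1
    rw [mul_assoc, mul_comm (∏ j ∈ (ps2 n).image (2 * ·), indSeries {k | j ∣ k}), hVI, mul_one]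
  rw [hRHS]
  have himg : ∏ j ∈ (ps2 n).image (2 * ·), (1 - (PowerSeries.X : PowerSeries ℚ)^j)
      = ∏ i ∈ ps2 n, (1 - (PowerSeries.X : PowerSeries ℚ)^(2*i)) :=
    Finset.prod_image (fun x _ y _ h => Nat.eq_of_mul_eq_mul_left (by norm_num) h)
  rw [himg, ← map_mul, lhs_red n, ← rhs_red n, ← gauss_trunc n]

/-- The term `pod((n - k(k+1)/2)/2)`, understood to be `0` unless `k(k+1)/2 ≤ n` and
`n - k(k+1)/2` is even (i.e. unless the argument is a nonnegative integer).
Terms with `k(k+1)/2 > n` vanish and any nonzero term has `k ≤ n`, so the infinite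
sum equals the finite sum over `0 ≤ k ≤ n`. -/
theorem stmt_13 (n : ℕ) :
    Q0 n = ∑ k ∈ Finset.range (n + 1),
      if k * (k + 1) / 2 ≤ n ∧ (n - k * (k + 1) / 2) % 2 = 0 then
        pod ((n - k * (k + 1) / 2) / 2)
      else 0 := by
  have hs1 : ∀ i ∈ ps1 n, 0 < i := by
    intro i hi
    simp only [ps1, Finset.mem_filter] at hi
    exact hi.2.2
  have hQ : (Q0 n : ℚ) = PowerSeries.coeff n
      (∏ i ∈ ps1 n, (1 + (PowerSeries.X : PowerSeries ℚ)^i)) := by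
    rw [Q0_eq_card n, gf_prop n (ps1 n) hs1 (fun _ => {m : ℕ | m ≤ 1})
      (fun i _ => by simp)]
    congr 1
    refine Finset.prod_congr rfl fun i hi => ?_
    rw [image_le_one i (hs1 i hi), indSeries_pair i (hs1 i hi)]
  have hs2 : ∀ j ∈ (ps2 n).image (2 * ·), 0 < j := by
    intro j hj
    obtain ⟨i, hi, rfl⟩ := Finset.mem_image.mp hj
    simp only [ps2, Finset.mem_filter] at hi
    omega
  have hP : ∀ m : ℕ, m ≤ n →
      PowerSeries.coeff m (∏ j ∈ (ps2 n).image (2 * ·), indSeries {k | j ∣ k})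
        = if m % 2 = 0 then (pod (m/2) : ℚ) else 0 := by
    intro m hm
    have h1 := gf_prop m ((ps2 n).image (2 * ·)) hs2 (fun _ => Set.univ)
      (fun _ _ => Set.mem_univ 0)
    have h2 : ∏ j ∈ (ps2 n).image (2 * ·), indSeries ((j * ·) '' Set.univ)
        = ∏ j ∈ (ps2 n).image (2 * ·), indSeries {k | j ∣ k} :=
      Finset.prod_congr rfl fun j _ => by rw [image_univ_mul]
    rw [h2] at h1
    rw [← h1]
    by_cases he : m % 2 = 0
    · obtain ⟨m', rfl⟩ : ∃ m', m = 2*m' := ⟨m/2, by omega⟩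
      rw [if_pos he]
      rw [card_double m' n]
      rw [show 2*m'/2 = m' by omega]
      rw [pod_eq_card m' n (by omega)]
    · rw [if_neg he, card_odd m n (by omega)]
      norm_num
  have hmain := coeff_eq_of_Phi_eq (main_cong n) n le_rfl
  rw [hmain] at hQ
  rw [Finset.sum_mul, map_sum] at hQ
  have hterm : ∀ k ∈ Finset.range (n+1),
      PowerSeries.coeff n ((PowerSeries.X : PowerSeries ℚ)^(tri k)
          * ∏ j ∈ (ps2 n).image (2 * ·), indSeries {k | j ∣ k})
        = if tri k ≤ n ∧ (n - tri k) % 2 = 0 then (pod ((n - tri k)/2) : ℚ) else 0 := by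
    intro k _
    rw [PowerSeries.coeff_X_pow_mul']
    by_cases h1 : tri k ≤ n
    · rw [if_pos h1, hP (n - tri k) (by omega)]
      by_cases h2 : (n - tri k) % 2 = 0
      · rw [if_pos h2, if_pos ⟨h1, h2⟩]
      · rw [if_neg h2, if_neg (by tauto)]
    · rw [if_neg h1, if_neg (by tauto)]
  rw [Finset.sum_congr rfl hterm] at hQ
  have hcast : ((∑ k ∈ Finset.range (n + 1),
      if k * (k + 1) / 2 ≤ n ∧ (n - k * (k + 1) / 2) % 2 = 0 then
        pod ((n - k * (k + 1) / 2) / 2)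
      else 0 : ℕ) : ℚ)
      = ∑ k ∈ Finset.range (n+1),
        if tri k ≤ n ∧ (n - tri k) % 2 = 0 then (pod ((n - tri k)/2) : ℚ) else 0 := by
    rw [Nat.cast_sum]
    refine Finset.sum_congr rfl fun k _ => ?_
    rw [← tri_eq]
    split_ifs with h
    · rfl
    · rfl
  have := hQ.trans hcast.symm
  exact Nat.cast_injective this

end AuxAll
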